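/- Let M ≥ 2 be an integer, let z1, …, zM be real numbers with zj < 0 for all j, and let s ≥ 1 be a real number. Then the convergence factor of the Parareal/FIE-DR method with M splitting terms satisfies K_{FIE-DR}(z1, …, zM, s) = |(R_DR(z1/s, …, zM/s))^s − ∏_{j=1}^M 1/(1 − zj)| / (1 − |∏_{j=1}^M 1/(1 − zj)|) < 1, where R_DR(z1, …, zM) = 1 + (∏_{j=1}^M 1/(1 − zj)) · ∑_{j=1}^M zj. -/

import Mathlib

set_option maxHeartbeats 1000000

open Finset

lemma aux_one_add_sum_le_prod {ι : Type*} (s : Finset ι) (f : ι → ℝ)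
    (hf : ∀ j ∈ s, 0 ≤ f j) : 1 + ∑ j ∈ s, f j ≤ ∏ j ∈ s, (1 + f j) := by
  induction s using Finset.cons_induction with
  | empty => simp
  | cons a s ha ih =>
    rw [Finset.prod_cons, Finset.sum_cons]
    have h1 := hf a (Finset.mem_cons_self a s)
    have h2 := ih (fun j hj => hf j (Finset.mem_cons_of_mem hj))
    have hsum : 0 ≤ ∑ j ∈ s, f j :=
      Finset.sum_nonneg fun j hj => hf j (Finset.mem_cons_of_mem hj)
    nlinarith

open Finset in
/-- Convergence factor bound for the Parareal/FIE-DR method with `M` splitting terms. -/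
theorem parareal_FIE_DR_conv_factor_M_terms
    (M : ℕ) (hM : 2 ≤ M) (z : Fin M → ℝ) (hz : ∀ j, z j < 0)
    (s : ℝ) (hs : 1 ≤ s) :
    |(1 + (∏ j, 1 / (1 - z j / s)) * ∑ j, z j / s) ^ s - ∏ j, 1 / (1 - z j)| /
      (1 - |∏ j, 1 / (1 - z j)|) < 1 := by
  have hs0 : (0:ℝ) < s := lt_of_lt_of_le one_pos hs
  have hne : (Finset.univ : Finset (Fin M)).Nonempty := by
    have : Nonempty (Fin M) := ⟨⟨0, by omega⟩⟩
    exact Finset.univ_nonempty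
  have hzs : ∀ j : Fin M, z j / s < 0 := fun j => div_neg_of_neg_of_pos (hz j) hs0
  set P : ℝ := ∏ j, (1 - z j) with hPdef
  set Ps : ℝ := ∏ j, (1 - z j / s) with hPsdef
  set S : ℝ := ∑ j, z j / s with hSdef
  set T : ℝ := -∑ j, z j with hTdef
  have hSneg : S < 0 := Finset.sum_neg (fun j _ => hzs j) hne
  have hTpos : 0 < T := by
    rw [hTdef, neg_pos]
    exact Finset.sum_neg (fun j _ => hz j) hne
  -- key product bounds
  have hkey_s : 1 - S ≤ Ps := by
    have := aux_one_add_sum_le_prod (Finset.univ : Finset (Fin M)) (fun j => -(z j / s))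
      (fun j _ => by simpa using (hzs j).le)
    calc 1 - S = 1 + ∑ j, -(z j / s) := by rw [hSdef, Finset.sum_neg_distrib]; ring
    _ ≤ ∏ j, (1 + -(z j / s)) := this
    _ = Ps := by rw [hPsdef]; apply Finset.prod_congr rfl; intro j _; ring
  have hkey : 1 + T ≤ P := by
    have := aux_one_add_sum_le_prod (Finset.univ : Finset (Fin M)) (fun j => -(z j))
      (fun j _ => by simpa using (hz j).le)
    calc 1 + T = 1 + ∑ j, -(z j) := by rw [hTdef, Finset.sum_neg_distrib]
    _ ≤ ∏ j, (1 + -(z j)) := this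
    _ = P := by rw [hPdef]; apply Finset.prod_congr rfl; intro j _; ring
  have hP1 : 1 < P := by linarith
  have hPs1 : 1 < Ps := by linarith
  have hPpos : 0 < P := by linarith
  have hPspos : 0 < Ps := by linarith
  have hGeq : (∏ j, 1 / (1 - z j)) = P⁻¹ := by
    rw [hPdef, ← Finset.prod_inv_distrib]; simp [one_div]
  have hQeq : (∏ j, 1 / (1 - z j / s)) = Ps⁻¹ := by
    rw [hPsdef, ← Finset.prod_inv_distrib]; simp [one_div]
  set G : ℝ := P⁻¹ with hGdef
  set Q : ℝ := Ps⁻¹ with hQdef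
  have hGpos : 0 < G := inv_pos.mpr hPpos
  have hGlt1 : G < 1 := inv_lt_one_of_one_lt₀ hP1
  have hQpos : 0 < Q := inv_pos.mpr hPspos
  have hQle1 : Q ≤ 1 := inv_le_one_of_one_le₀ hPs1.le
  -- F
  have hGP : G * P = 1 := inv_mul_cancel₀ (ne_of_gt hPpos)
  have hQS : Q * S = S / Ps := by rw [hQdef, inv_mul_eq_div]
  have hFpos : 0 < 1 + Q * S := by
    rw [hQS]
    have h1 : -S / Ps < 1 := by rw [div_lt_one hPspos]; linarith
    have h2 : S / Ps = -(-S / Ps) := by ring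
    rw [h2]; linarith
  have hFlt1 : 1 + Q * S < 1 := by
    have : Q * S < 0 := mul_neg_of_pos_of_neg hQpos hSneg
    linarith
  rw [hGeq, hQeq, abs_of_pos hGpos]
  have hden : 0 < 1 - G := by linarith
  rw [div_lt_one hden, abs_lt]
  have hFs_lt1 : (1 + Q * S) ^ s < 1 := Real.rpow_lt_one hFpos.le hFlt1 hs0
  have hFs_pos : 0 < (1 + Q * S) ^ s := Real.rpow_pos_of_pos hFpos s
  constructor
  · -- need 2G - 1 < F^s
    rcases le_or_gt (2 * G) 1 with hG2 | hG2
    · linarith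
    · -- G > 1/2 : P < 2, T < 1
      have hPlt2 : P < 2 := by
        nlinarith [mul_lt_mul_of_pos_right hG2 hPpos, hGP]
      have hTlt1 : T < 1 := by linarith
      -- Bernoulli
      have hbern : 1 + s * (Q * S) ≤ (1 + Q * S) ^ s := by
        apply one_add_mul_self_le_rpow_one_add _ hs
        nlinarith
      have hsS : s * S = ∑ j, z j := by
        rw [hSdef, Finset.mul_sum]
        exact Finset.sum_congr rfl fun j _ => mul_div_cancel₀ (z j) (ne_of_gt hs0)
      have hsQS : s * (Q * S) = -(Q * T) := by
        rw [show s * (Q * S) = Q * (s * S) by ring, hsS, hTdef]; ring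
      rw [hsQS] at hbern
      have hQT : Q * T ≤ T := by nlinarith
      have h1 : T * P < 2 * T := by nlinarith [mul_lt_mul_of_pos_left hPlt2 hTpos]
      have h2 : T * P + 2 < 2 * P := by linarith
      have h3 : (2 - 2 * G) * P = 2 * P - 2 := by linear_combination (-2 : ℝ) * hGP
      have hT2 : T < 2 - 2 * G := by
        have h4 : T * P < (2 - 2 * G) * P := by linarith
        exact lt_of_mul_lt_mul_right h4 hPpos.le
      linarith
  · linarith
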